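/- Let J : ℂ^{2^k} → ℂ^{2^n} be a linear isometry (J†J = I), let U be a unitary 2^k × 2^k matrix, and let |S⟩ ∈ ℂ^{2^k} be a unit vector such that ⟨S| J† P J |S⟩ ∈ {−1, 0, 1} for every P ∈ P_n^+ (this holds in particular when J is a Clifford encoding isometry of a stabilizer code and |S⟩ is a stabilizer state). Set |ψ̄⟩ = J U |S⟩. If there exists a subset R ⊆ {1, ..., n} such that Σ_{P ∈ P_n^+ : supp(P) = R} |⟨ψ̄| P |ψ̄⟩|² is not an integer, then there do not exist 2×2 unitary matrices V_1, ..., V_n and a real number θ with (V_1 ⊗ ⋯ ⊗ V_n) J = e^{iθ} J U. -/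

import Mathlib

open Matrix

/-- The single-qubit Pauli matrices I, X, Y, Z. -/
noncomputable def pauli : Fin 4 → Matrix (Fin 2) (Fin 2) ℂ
  | 0 => 1
  | 1 => !![0, 1; 1, 0]
  | 2 => !![0, -Complex.I; Complex.I, 0]
  | 3 => !![1, 0; 0, -1]

/-- The n-qubit Pauli string (with phase +1). -/
noncomputable def pauliString {n : ℕ} (s : Fin n → Fin 4) :
    Matrix (Fin n → Fin 2) (Fin n → Fin 2) ℂ :=
  fun x y => ∏ i, pauli (s i) (x i) (y i)

/-- The Kronecker product V_1 ⊗ ⋯ ⊗ V_n of single-qubit matrices. -/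
noncomputable def tensorFold {n : ℕ} (V : Fin n → Matrix (Fin 2) (Fin 2) ℂ) :
    Matrix (Fin n → Fin 2) (Fin n → Fin 2) ℂ :=
  fun x y => ∏ i, V i (x i) (y i)

section Auxiliary

lemma pauli_expand (M : Matrix (Fin 2) (Fin 2) ℂ) :
    M = ∑ b : Fin 4, ((pauli b * M).trace / 2) • pauli b := by
  ext i j
  simp only [Finset.sum_apply, Matrix.sum_apply, Matrix.smul_apply, Matrix.trace,
    Matrix.diag, Matrix.mul_apply, Fin.sum_univ_four, Fin.sum_univ_two, smul_eq_mul]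
  fin_cases i <;> fin_cases j <;>
    simp [pauli, Matrix.one_apply] <;> ring_nf <;>
    simp [Complex.I_sq] <;> ring

lemma pauli_complete (A B : Matrix (Fin 2) (Fin 2) ℂ) :
    ∑ a : Fin 4, (pauli a * A).trace * (pauli a * B).trace = 2 * (A * B).trace := by
  simp only [Matrix.trace, Matrix.diag, Matrix.mul_apply, Fin.sum_univ_four, Fin.sum_univ_two]
  simp [pauli, Matrix.one_apply]
  ring_nf
  simp [Complex.I_sq]
  ring

lemma pauli_herm (a : Fin 4) : (pauli a)ᴴ = pauli a := by
  fin_cases a <;> ext i j <;> fin_cases i <;> fin_cases j <;>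
    simp [pauli, Matrix.conjTranspose_apply, Matrix.one_apply]

lemma pauli_trace (b : Fin 4) : (pauli b).trace = if b = 0 then 2 else 0 := by
  fin_cases b <;> simp [pauli, Matrix.trace, Matrix.diag, Fin.sum_univ_two, Matrix.one_apply]

lemma pauli_orth (b b' : Fin 4) : (pauli b * pauli b').trace = if b = b' then 2 else 0 := by
  fin_cases b <;> fin_cases b' <;>
    simp [pauli, Matrix.trace, Matrix.diag, Matrix.mul_apply, Fin.sum_univ_two,
      Matrix.one_apply] <;> ring_nf <;> simp [Complex.I_sq]

/-- Expansion coefficients of `Vᴴ * pauli a * V` in the Pauli basis. -/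
noncomputable def pcoef (V : Matrix (Fin 2) (Fin 2) ℂ) (a b : Fin 4) : ℂ :=
  (pauli b * (Vᴴ * pauli a * V)).trace / 2

lemma pcoef_expand (V : Matrix (Fin 2) (Fin 2) ℂ) (a : Fin 4) :
    Vᴴ * pauli a * V = ∑ b : Fin 4, pcoef V a b • pauli b := by
  simpa [pcoef] using pauli_expand (Vᴴ * pauli a * V)

section
variable {V : Matrix (Fin 2) (Fin 2) ℂ} (hV : V ∈ Matrix.unitaryGroup (Fin 2) ℂ)
include hV

lemma hVl : Vᴴ * V = 1 := by
  have := hV.1; rwa [Matrix.star_eq_conjTranspose] at this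

lemma hVr : V * Vᴴ = 1 := by
  have := hV.2; rwa [Matrix.star_eq_conjTranspose] at this

lemma pcoef_zero_left (b : Fin 4) : pcoef V 0 b = if b = 0 then 1 else 0 := by
  have h : Vᴴ * pauli 0 * V = 1 := by
    have : pauli 0 = (1 : Matrix (Fin 2) (Fin 2) ℂ) := rfl
    rw [this, Matrix.mul_one, hVl hV]
  rw [pcoef, h, Matrix.mul_one, pauli_trace]
  split <;> norm_num

lemma pcoef_zero_right (a : Fin 4) (ha : a ≠ 0) : pcoef V a 0 = 0 := by
  have h1 : pauli 0 * (Vᴴ * pauli a * V) = Vᴴ * pauli a * V := by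
    have : pauli 0 = (1 : Matrix (Fin 2) (Fin 2) ℂ) := rfl
    rw [this, Matrix.one_mul]
  rw [pcoef, h1]
  have : (Vᴴ * pauli a * V).trace = (pauli a).trace := by
    rw [Matrix.trace_mul_cycle, hVr hV, Matrix.one_mul]
  rw [this, pauli_trace, if_neg ha]
  norm_num

lemma pcoef_orth (b b' : Fin 4) :
    ∑ a : Fin 4, pcoef V a b * (starRingEnd ℂ) (pcoef V a b') = if b = b' then 1 else 0 := by
  have hcyc : ∀ (P Q : Fin 4), ((Vᴴ * pauli P * V) * pauli Q).trace
      = (pauli P * (V * pauli Q * Vᴴ)).trace := by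
    intro P Q
    have e1 : (Vᴴ * pauli P * V) * pauli Q = Vᴴ * (pauli P * V * pauli Q) := by
      simp [Matrix.mul_assoc]
    rw [e1, Matrix.trace_mul_comm]
    congr 1
    simp [Matrix.mul_assoc]
  have hconj : ∀ a, (starRingEnd ℂ) (pcoef V a b') =
      (pauli a * (V * pauli b' * Vᴴ)).trace / 2 := by
    intro a
    have h0 : (starRingEnd ℂ) ((pauli b' * (Vᴴ * pauli a * V)).trace) =
        ((pauli b' * (Vᴴ * pauli a * V))ᴴ).trace := by
      rw [Matrix.trace_conjTranspose]; rfl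
    have h2 : (pauli b' * (Vᴴ * pauli a * V))ᴴ = (Vᴴ * pauli a * V) * pauli b' := by
      rw [Matrix.conjTranspose_mul, pauli_herm]
      congr 1
      rw [Matrix.conjTranspose_mul, Matrix.conjTranspose_mul, pauli_herm,
        Matrix.conjTranspose_conjTranspose]
      simp [Matrix.mul_assoc]
    rw [pcoef, map_div₀, h0, h2, hcyc, Complex.conj_ofNat]
  have hleft : ∀ a, pcoef V a b = (pauli a * (V * pauli b * Vᴴ)).trace / 2 := by
    intro a
    rw [pcoef]
    congr 1
    rw [Matrix.trace_mul_comm, hcyc]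
  calc ∑ a : Fin 4, pcoef V a b * (starRingEnd ℂ) (pcoef V a b')
      = (∑ a : Fin 4, (pauli a * (V * pauli b * Vᴴ)).trace *
          (pauli a * (V * pauli b' * Vᴴ)).trace) / 4 := by
        rw [Finset.sum_div]
        refine Finset.sum_congr rfl fun a _ => ?_
        rw [hconj a, hleft a]; ring
    _ = 2 * ((V * pauli b * Vᴴ) * (V * pauli b' * Vᴴ)).trace / 4 := by
        rw [pauli_complete]
    _ = (pauli b * pauli b').trace / 2 := by
        have h3 : (V * pauli b * Vᴴ) * (V * pauli b' * Vᴴ) = V * (pauli b * pauli b') * Vᴴ := by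
          calc (V * pauli b * Vᴴ) * (V * pauli b' * Vᴴ)
              = V * pauli b * (Vᴴ * V) * (pauli b' * Vᴴ) := by simp [Matrix.mul_assoc]
            _ = V * (pauli b * pauli b') * Vᴴ := by rw [hVl hV]; simp [Matrix.mul_assoc]
        rw [h3]
        have h4 : (V * (pauli b * pauli b') * Vᴴ).trace = (pauli b * pauli b').trace := by
          rw [Matrix.trace_mul_cycle, ← Matrix.mul_assoc, hVl hV, Matrix.one_mul]
        rw [h4]; ring
    _ = if b = b' then 1 else 0 := by rw [pauli_orth]; split <;> norm_num
end

lemma pauliString_eq_tensorFold {n : ℕ} (s : Fin n → Fin 4) :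
    pauliString s = tensorFold (fun i => pauli (s i)) := rfl

lemma tensorFold_conjTranspose {n : ℕ} (V : Fin n → Matrix (Fin 2) (Fin 2) ℂ) :
    (tensorFold V)ᴴ = tensorFold (fun i => (V i)ᴴ) := by
  ext x y
  simp [tensorFold, Matrix.conjTranspose_apply, map_prod]

lemma tensorFold_mul {n : ℕ} (V W : Fin n → Matrix (Fin 2) (Fin 2) ℂ) :
    tensorFold V * tensorFold W = tensorFold (fun i => V i * W i) := by
  ext x y
  simp only [Matrix.mul_apply, tensorFold]
  rw [Fintype.prod_sum (fun i b => V i (x i) b * W i b (y i))]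
  exact Finset.sum_congr rfl fun z _ => (Finset.prod_mul_distrib).symm

lemma tensorFold_sum {n : ℕ} (g : Fin n → Fin 4 → Matrix (Fin 2) (Fin 2) ℂ) :
    tensorFold (fun i => ∑ b : Fin 4, g i b)
      = ∑ t : Fin n → Fin 4, tensorFold (fun i => g i (t i)) := by
  ext x y
  simp only [tensorFold, Matrix.sum_apply, Finset.sum_apply]
  rw [Fintype.prod_sum (fun i b => g i b (x i) (y i))]

/-- Expectation value of a matrix in a vector. -/
noncomputable def expec {m : Type*} [Fintype m] (φ : m → ℂ) (M : Matrix m m ℂ) : ℂ :=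
  star φ ⬝ᵥ (M *ᵥ φ)

lemma expec_sum {m : Type*} [Fintype m] {ι : Type*} [DecidableEq ι] (s : Finset ι) (φ : m → ℂ)
    (A : ι → Matrix m m ℂ) : expec φ (∑ t ∈ s, A t) = ∑ t ∈ s, expec φ (A t) := by
  simp only [expec]
  induction s using Finset.induction with
  | empty => simp [Matrix.zero_mulVec]
  | insert _ _ h ih => simp [Finset.sum_insert h, Matrix.add_mulVec, dotProduct_add, ih]

lemma expec_smul {m : Type*} [Fintype m] (φ : m → ℂ) (c : ℂ) (M : Matrix m m ℂ) :
    expec φ (c • M) = c * expec φ M := by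
  simp [expec, Matrix.smul_mulVec, dotProduct_smul, smul_eq_mul]

lemma expec_conj {m m' : Type*} [Fintype m] [Fintype m'] (W : Matrix m' m ℂ) (φ : m → ℂ)
    (M : Matrix m' m' ℂ) :
    star (W *ᵥ φ) ⬝ᵥ (M *ᵥ (W *ᵥ φ)) = expec φ (Wᴴ * M * W) := by
  rw [Matrix.star_mulVec, Matrix.mulVec_mulVec, ← Matrix.dotProduct_mulVec,
    Matrix.mulVec_mulVec, expec, ← Matrix.mul_assoc]

end Auxiliary

/-- Transversal-gate testing criterion.  Let J be an isometry from k qubits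
into n qubits, U a k-qubit unitary, |S⟩ a unit vector all of whose Pauli expectation
values through J lie in {−1,0,1}, and |ψ̄⟩ = J U |S⟩.  If for some R ⊆ {1,...,n} the sum
Σ_{P ∈ P_n^+ : supp(P) = R} |⟨ψ̄|P|ψ̄⟩|² is not an integer, then there are no single-qubit
unitaries V_1,...,V_n and phase e^{iθ} with (V_1 ⊗ ⋯ ⊗ V_n) J = e^{iθ} J U. -/
theorem transversal_gate_testing {n k : ℕ}
    (J : Matrix (Fin n → Fin 2) (Fin k → Fin 2) ℂ)
    (hJ : Jᴴ * J = 1)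
    (U : Matrix (Fin k → Fin 2) (Fin k → Fin 2) ℂ)
    (hU : U ∈ Matrix.unitaryGroup (Fin k → Fin 2) ℂ)
    (S : (Fin k → Fin 2) → ℂ)
    (hSunit : star S ⬝ᵥ S = 1)
    (hstab : ∀ s : Fin n → Fin 4,
      star S ⬝ᵥ ((Jᴴ * pauliString s * J) *ᵥ S) ∈ ({-1, 0, 1} : Set ℂ))
    (ψ : (Fin n → Fin 2) → ℂ)
    (hψ : ψ = J *ᵥ (U *ᵥ S))
    (hnonint : ∃ R : Finset (Fin n),
      ¬ ∃ z : ℤ,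
        (∑ s ∈ Finset.univ.filter (fun s : Fin n → Fin 4 => ∀ i, s i ≠ 0 ↔ i ∈ R),
          ‖star ψ ⬝ᵥ (pauliString s *ᵥ ψ)‖ ^ 2) = (z : ℝ)) :
    ¬ ∃ (V : Fin n → Matrix (Fin 2) (Fin 2) ℂ) (θ : ℝ),
        (∀ i, V i ∈ Matrix.unitaryGroup (Fin 2) ℂ) ∧
        tensorFold V * J = Complex.exp (θ * Complex.I) • (J * U) := by
  rintro ⟨V, θ, hVu, hEq⟩
  obtain ⟨R, hR⟩ := hnonint
  apply hR
  classical
  set c : ℂ := Complex.exp (θ * Complex.I) with hcdef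
  have hcne : c ≠ 0 := Complex.exp_ne_zero _
  have hcunit : (starRingEnd ℂ) c * c = 1 := by
    have habs : ‖c‖ = 1 := by
      rw [hcdef, Complex.norm_exp]
      simp
    rw [← Complex.normSq_eq_conj_mul_self, Complex.normSq_eq_norm_sq, habs]
    norm_num
  set φ : (Fin n → Fin 2) → ℂ := J *ᵥ S with hφdef
  set W := tensorFold V with hWdef
  set e : (Fin n → Fin 4) → ℂ := fun t => star S ⬝ᵥ ((Jᴴ * pauliString t * J) *ᵥ S) with hedef
  have hexp_e : ∀ t, expec φ (pauliString t) = e t := by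
    intro t
    rw [hφdef, expec, expec_conj J S (pauliString t)]
    rfl
  -- ψ in terms of φ
  have hψφ : ψ = c⁻¹ • (W *ᵥ φ) := by
    have h2 : J * U = c⁻¹ • (W * J) := by
      rw [hEq, smul_smul, inv_mul_cancel₀ hcne, one_smul]
    rw [hψ, hφdef, Matrix.mulVec_mulVec, h2, Matrix.smul_mulVec, ← Matrix.mulVec_mulVec]
  -- Step A: expansion of the expectation values of ψ
  have hE : ∀ s : Fin n → Fin 4, star ψ ⬝ᵥ (pauliString s *ᵥ ψ)
      = ∑ t : Fin n → Fin 4, (∏ i, pcoef (V i) (s i) (t i)) * e t := by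
    intro s
    have hWPW : Wᴴ * pauliString s * W
        = ∑ t : Fin n → Fin 4, (∏ i, pcoef (V i) (s i) (t i)) • pauliString t := by
      rw [hWdef, tensorFold_conjTranspose, pauliString_eq_tensorFold, tensorFold_mul,
        tensorFold_mul]
      have h1 : (fun i => (V i)ᴴ * pauli (s i) * (V i))
          = fun i => ∑ b : Fin 4, pcoef (V i) (s i) b • pauli b :=
        funext fun i => pcoef_expand (V i) (s i)
      rw [h1, tensorFold_sum]
      refine Finset.sum_congr rfl fun t _ => ?_
      ext x y
      simp [tensorFold, pauliString, Matrix.smul_apply, smul_eq_mul, Finset.prod_mul_distrib]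
    calc star ψ ⬝ᵥ (pauliString s *ᵥ ψ)
        = ((starRingEnd ℂ) c⁻¹ * c⁻¹) * (star (W *ᵥ φ) ⬝ᵥ (pauliString s *ᵥ (W *ᵥ φ))) := by
          rw [hψφ]
          rw [Matrix.mulVec_smul, star_smul, smul_dotProduct, dotProduct_smul]
          simp [smul_eq_mul, mul_assoc]
      _ = star (W *ᵥ φ) ⬝ᵥ (pauliString s *ᵥ (W *ᵥ φ)) := by
          have : (starRingEnd ℂ) c⁻¹ * c⁻¹ = 1 := by
            rw [map_inv₀, ← mul_inv, hcunit, inv_one]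
          rw [this, one_mul]
      _ = expec φ (Wᴴ * pauliString s * W) := expec_conj W φ (pauliString s)
      _ = ∑ t : Fin n → Fin 4, (∏ i, pcoef (V i) (s i) (t i)) * e t := by
          rw [hWPW, expec_sum]
          exact Finset.sum_congr rfl fun t _ => by rw [expec_smul, hexp_e]
  set D : (Fin n → Fin 4) → (Fin n → Fin 4) → ℂ :=
    fun s t => ∏ i, pcoef (V i) (s i) (t i) with hDdef
  -- Step B: per-site sums
  have hsite : ∀ (t t' : Fin n → Fin 4) (i : Fin n),
      (∑ a : Fin 4, if (a ≠ 0 ↔ i ∈ R)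
          then pcoef (V i) a (t i) * (starRingEnd ℂ) (pcoef (V i) a (t' i)) else 0)
        = if (t i = t' i ∧ (t i ≠ 0 ↔ i ∈ R)) then 1 else 0 := by
    intro t t' i
    set g : Fin 4 → ℂ :=
      fun a => pcoef (V i) a (t i) * (starRingEnd ℂ) (pcoef (V i) a (t' i)) with hg
    have hg0 : g 0 = (if t i = 0 then 1 else 0) * (if t' i = 0 then 1 else 0) := by
      rw [hg]
      simp only
      rw [pcoef_zero_left (hVu i), pcoef_zero_left (hVu i)]
      congr 1
      split <;> simp
    have hgsum : ∑ a, g a = if t i = t' i then 1 else 0 := pcoef_orth (hVu i) (t i) (t' i)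
    by_cases hiR : i ∈ R
    · calc (∑ a : Fin 4, if (a ≠ 0 ↔ i ∈ R) then g a else 0)
          = ∑ a : Fin 4, (g a - if a = 0 then g a else 0) := by
            refine Finset.sum_congr rfl fun a _ => ?_
            by_cases h : a = 0 <;> simp [h, hiR]
        _ = (∑ a, g a) - ∑ a : Fin 4, (if a = 0 then g a else 0) := Finset.sum_sub_distrib _ _
        _ = (if t i = t' i then 1 else 0) - g 0 := by
            rw [hgsum, Finset.sum_ite_eq' Finset.univ (0 : Fin 4) g]
            simp
        _ = if (t i = t' i ∧ (t i ≠ 0 ↔ i ∈ R)) then 1 else 0 := by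
            rw [hg0]
            by_cases h1 : t i = t' i <;> by_cases h2 : t i = 0 <;> by_cases h3 : t' i = 0 <;>
              first
                | (exact absurd (h2.trans h3.symm) h1)
                | simp [h1, h2, h3, hiR, eq_comm]
    · calc (∑ a : Fin 4, if (a ≠ 0 ↔ i ∈ R) then g a else 0)
          = ∑ a : Fin 4, (if a = 0 then g a else 0) := by
            refine Finset.sum_congr rfl fun a _ => ?_
            by_cases h : a = 0 <;> simp [h, hiR]
        _ = g 0 := by rw [Finset.sum_ite_eq' Finset.univ (0 : Fin 4) g]; simp
        _ = if (t i = t' i ∧ (t i ≠ 0 ↔ i ∈ R)) then 1 else 0 := by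
            rw [hg0]
            by_cases h1 : t i = t' i <;> by_cases h2 : t i = 0 <;> by_cases h3 : t' i = 0 <;>
              first
                | (exact absurd (h2.trans h3.symm) h1)
                | simp [h1, h2, h3, hiR, eq_comm]
  -- Step B: the coefficient Gram sum over the filtered set
  have hK : ∀ t t' : Fin n → Fin 4,
      (∑ s ∈ Finset.univ.filter (fun s : Fin n → Fin 4 => ∀ i, s i ≠ 0 ↔ i ∈ R),
        D s t * (starRingEnd ℂ) (D s t'))
      = if (t = t' ∧ ∀ i, t i ≠ 0 ↔ i ∈ R) then 1 else 0 := by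
    intro t t'
    rw [Finset.sum_filter]
    have hterm : ∀ s : Fin n → Fin 4,
        (if (∀ i, s i ≠ 0 ↔ i ∈ R) then D s t * (starRingEnd ℂ) (D s t') else 0)
        = ∏ i, (if (s i ≠ 0 ↔ i ∈ R)
            then pcoef (V i) (s i) (t i) * (starRingEnd ℂ) (pcoef (V i) (s i) (t' i)) else 0) := by
      intro s
      rw [Fintype.prod_ite_zero]
      by_cases h : ∀ i, s i ≠ 0 ↔ i ∈ R
      · rw [if_pos h, if_pos h, hDdef]
        simp only
        rw [map_prod, ← Finset.prod_mul_distrib]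
      · rw [if_neg h, if_neg h]
    rw [Finset.sum_congr rfl fun s _ => hterm s]
    rw [← Fintype.prod_sum (fun i a => if (a ≠ 0 ↔ i ∈ R)
        then pcoef (V i) a (t i) * (starRingEnd ℂ) (pcoef (V i) a (t' i)) else 0)]
    rw [Finset.prod_congr rfl fun i _ => hsite t t' i]
    rw [Fintype.prod_boole]
    have hiff : (∀ i, t i = t' i ∧ (t i ≠ 0 ↔ i ∈ R))
        ↔ (t = t' ∧ ∀ i, t i ≠ 0 ↔ i ∈ R) := by
      constructor
      · intro h; exact ⟨funext fun i => (h i).1, fun i => (h i).2⟩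
      · rintro ⟨h1, h2⟩ i; exact ⟨congrFun h1 i, h2 i⟩
    simp only [hiff]
  -- Step B: the key identity
  have key : (∑ s ∈ Finset.univ.filter (fun s : Fin n → Fin 4 => ∀ i, s i ≠ 0 ↔ i ∈ R),
      (star ψ ⬝ᵥ (pauliString s *ᵥ ψ)) * (starRingEnd ℂ) (star ψ ⬝ᵥ (pauliString s *ᵥ ψ)))
      = ∑ t ∈ Finset.univ.filter (fun t : Fin n → Fin 4 => ∀ i, t i ≠ 0 ↔ i ∈ R),
        e t * (starRingEnd ℂ) (e t) := by
    have hEE : ∀ s : Fin n → Fin 4,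
        (star ψ ⬝ᵥ (pauliString s *ᵥ ψ)) * (starRingEnd ℂ) (star ψ ⬝ᵥ (pauliString s *ᵥ ψ))
        = ∑ t : Fin n → Fin 4, ∑ t' : Fin n → Fin 4,
            (D s t * (starRingEnd ℂ) (D s t')) * (e t * (starRingEnd ℂ) (e t')) := by
      intro s
      rw [hE s, map_sum, Finset.sum_mul_sum]
      refine Finset.sum_congr rfl fun t _ => Finset.sum_congr rfl fun t' _ => ?_
      simp only [hDdef, _root_.map_mul]
      ring
    rw [Finset.sum_congr rfl fun s _ => hEE s]
    rw [Finset.sum_comm]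
    rw [Finset.sum_congr rfl fun t _ => Finset.sum_comm]
    have hinner : ∀ t t' : Fin n → Fin 4,
        (∑ s ∈ Finset.univ.filter (fun s : Fin n → Fin 4 => ∀ i, s i ≠ 0 ↔ i ∈ R),
          (D s t * (starRingEnd ℂ) (D s t')) * (e t * (starRingEnd ℂ) (e t')))
        = (if (t = t' ∧ ∀ i, t i ≠ 0 ↔ i ∈ R) then 1 else 0)
            * (e t * (starRingEnd ℂ) (e t')) := by
      intro t t'
      rw [← Finset.sum_mul, hK t t']
    rw [Finset.sum_congr rfl fun t _ => Finset.sum_congr rfl fun t' _ => hinner t t']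
    have hdiag : ∀ t : Fin n → Fin 4,
        (∑ t' : Fin n → Fin 4,
          (if (t = t' ∧ ∀ i, t i ≠ 0 ↔ i ∈ R) then 1 else 0)
            * (e t * (starRingEnd ℂ) (e t')))
        = if (∀ i, t i ≠ 0 ↔ i ∈ R) then e t * (starRingEnd ℂ) (e t) else 0 := by
      intro t
      have hterm2 : ∀ t' : Fin n → Fin 4,
          (if (t = t' ∧ ∀ i, t i ≠ 0 ↔ i ∈ R) then 1 else 0)
              * (e t * (starRingEnd ℂ) (e t'))
          = if t' = t then (if (∀ i, t i ≠ 0 ↔ i ∈ R)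
              then e t * (starRingEnd ℂ) (e t') else 0) else 0 := by
        intro t'
        by_cases h1 : t' = t
        · subst h1
          by_cases h2 : ∀ i, t' i ≠ 0 ↔ i ∈ R <;> simp [h2]
        · have h1' : ¬ t = t' := fun hc => h1 hc.symm
          simp [h1, h1']
      rw [Finset.sum_congr rfl fun t' _ => hterm2 t']
      rw [Finset.sum_ite_eq' Finset.univ t
        (fun t' => if (∀ i, t i ≠ 0 ↔ i ∈ R) then e t * (starRingEnd ℂ) (e t') else 0)]
      simp
    rw [Finset.sum_congr rfl fun t _ => hdiag t]
    rw [Finset.sum_filter]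
  -- Step C: the right-hand side is a natural number
  have hval : ∀ t : Fin n → Fin 4,
      e t * (starRingEnd ℂ) (e t) = if e t ≠ 0 then 1 else 0 := by
    intro t
    have hm := hstab t
    have het : e t = star S ⬝ᵥ ((Jᴴ * pauliString t * J) *ᵥ S) := rfl
    rw [← het] at hm
    simp only [Set.mem_insert_iff, Set.mem_singleton_iff] at hm
    rcases hm with h | h | h <;> rw [h] <;> norm_num
  have hcardsum :
      (∑ t ∈ Finset.univ.filter (fun t : Fin n → Fin 4 => ∀ i, t i ≠ 0 ↔ i ∈ R),
        e t * (starRingEnd ℂ) (e t))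
      = (((Finset.univ.filter (fun t : Fin n → Fin 4 => ∀ i, t i ≠ 0 ↔ i ∈ R)).filter
          (fun t => e t ≠ 0)).card : ℂ) := by
    rw [Finset.sum_congr rfl fun t _ => hval t, Finset.sum_boole]
  refine ⟨(((Finset.univ.filter (fun t : Fin n → Fin 4 => ∀ i, t i ≠ 0 ↔ i ∈ R)).filter
      (fun t => e t ≠ 0)).card : ℤ), ?_⟩
  have hfin : ((∑ s ∈ Finset.univ.filter (fun s : Fin n → Fin 4 => ∀ i, s i ≠ 0 ↔ i ∈ R),
      ‖star ψ ⬝ᵥ (pauliString s *ᵥ ψ)‖ ^ 2 : ℝ) : ℂ)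
      = (((Finset.univ.filter (fun t : Fin n → Fin 4 => ∀ i, t i ≠ 0 ↔ i ∈ R)).filter
          (fun t => e t ≠ 0)).card : ℂ) := by
    rw [Complex.ofReal_sum]
    have hes : ∀ s : Fin n → Fin 4, ((‖star ψ ⬝ᵥ (pauliString s *ᵥ ψ)‖ ^ 2 : ℝ) : ℂ)
        = (star ψ ⬝ᵥ (pauliString s *ᵥ ψ))
            * (starRingEnd ℂ) (star ψ ⬝ᵥ (pauliString s *ᵥ ψ)) := by
      intro s
      rw [Complex.mul_conj, Complex.normSq_eq_norm_sq]
    rw [Finset.sum_congr rfl fun s _ => hes s, key, hcardsum]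
  exact_mod_cast hfin
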